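/- Let F : ℝ^{M×n} → ℝ be C² and polyconvex, meaning F(X) = G(T(X)) where T(X) is the vector of all k×k subdeterminants of X (for 1 ≤ k ≤ min(M,n)) and G is convex. Then F is rank-one convex: for all X, Y ∈ ℝ^{M×n} with rank(X - Y) ≤ 1 and λ ∈ [0,1], F(λX + (1-λ)Y) ≤ λF(X) + (1-λ)F(Y). -/

import Mathlib

/-- Index type for all `k×k` minors of an `M×n` matrix, `1 ≤ k ≤ min M n`:
a size parameter `k` together with a choice of `k+1` rows and `k+1` columns. -/
def MinorIndex (M n : ℕ) : Type :=
  Σ k : Fin (min M n), (Fin (k.1 + 1) ↪ Fin M) × (Fin (k.1 + 1) ↪ Fin n)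

/-- The vector of all subdeterminants (minors) of `X`. -/
noncomputable def minors {M n : ℕ} (X : Fin M → Fin n → ℝ) : MinorIndex M n → ℝ :=
  fun p => ((Matrix.of X).submatrix p.2.1 p.2.2).det


/-- Determinant of a rank-one perturbation is affine in the perturbation parameter. -/
lemma det_rankOne_affine {ι : Type*} [DecidableEq ι] [Fintype ι]
    (B : ι → ι → ℝ) (u v : ι → ℝ) (c : ℝ) :
    Matrix.det (Matrix.of fun i j => B i j + c * (u i * v j))
      = (1 - c) * Matrix.det (Matrix.of B)
        + c * Matrix.det (Matrix.of fun i j => B i j + u i * v j) := by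
  set d : (ι → ℝ) [⋀^ι]→ₗ[ℝ] ℝ := Matrix.detRowAlternating with hd
  -- rewrite determinants via the alternating map on rows
  have hdet : ∀ f : ι → ι → ℝ, Matrix.det (Matrix.of f) = d f := fun _ => rfl
  set T : ℝ → Finset ι → ℝ :=
    fun t s => d (s.piecewise B (fun i => (t * u i) • v)) with hT
  have hTval : ∀ (t : ℝ) (s : Finset ι),
      T t s = (∏ i ∈ sᶜ, (t * u i)) * d (s.piecewise B (fun _ => v)) := by
    intro t s
    have hpw : s.piecewise B (fun i => (t * u i) • v)
        = sᶜ.piecewise (fun i => (t * u i) • (s.piecewise B (fun _ => v)) i)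
            (s.piecewise B (fun _ => v)) := by
      funext i
      by_cases hi : i ∈ s
      · rw [Finset.piecewise_eq_of_mem _ _ _ hi,
          Finset.piecewise_eq_of_notMem _ _ _ (by simpa using hi),
          Finset.piecewise_eq_of_mem _ _ _ hi]
      · rw [Finset.piecewise_eq_of_notMem _ _ _ hi,
          Finset.piecewise_eq_of_mem _ _ _ (by simpa using hi),
          Finset.piecewise_eq_of_notMem _ _ _ hi]
    rw [hT]
    simp only [hpw]
    have := d.toMultilinearMap.map_piecewise_smul (fun i => t * u i)
      (s.piecewise B (fun _ => v)) sᶜ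
    simpa [smul_eq_mul] using this
  have hTne : ∀ (t : ℝ) (s : Finset ι), s ≠ Finset.univ → T t s = t * T 1 s := by
    intro t s hs
    rw [hTval, hTval]
    by_cases hzero : d (s.piecewise B (fun _ => v)) = 0
    · rw [hzero]; ring
    -- the complement has at most one element, and it is nonempty
    have hcard : sᶜ.card ≤ 1 := by
      by_contra hc
      push_neg at hc
      obtain ⟨i, hi, j, hj, hij⟩ := Finset.one_lt_card.mp hc
      exact hzero (d.map_eq_zero_of_eq _ (by
        rw [Finset.piecewise_eq_of_notMem _ _ _ (by simpa using hi),
          Finset.piecewise_eq_of_notMem _ _ _ (by simpa using hj)]) hij)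
    have hne : sᶜ.Nonempty := by
      rw [← Finset.card_pos]
      rcases Nat.eq_zero_or_pos sᶜ.card with h | h
      · exact absurd (by simpa [Finset.card_eq_zero, Finset.compl_eq_empty_iff] using h) hs
      · exact h
    obtain ⟨i, hi⟩ := Finset.card_eq_one.mp (le_antisymm hcard hne.card_pos)
    rw [hi]
    simp only [Finset.prod_singleton]
    ring
  have expand : ∀ t : ℝ,
      d (fun i => B i + (t * u i) • v) = ∑ s : Finset ι, T t s := by
    intro t
    have := d.toMultilinearMap.map_add_univ B (fun i => (t * u i) • v)
    exact this
  have huniv : ∀ t : ℝ, T t Finset.univ = d B := by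
    intro t; rw [hT]; simp [Finset.piecewise_univ]
  have hsplit : ∀ t : ℝ, d (fun i => B i + (t * u i) • v)
      = d B + ∑ s ∈ (Finset.univ : Finset (Finset ι)).erase Finset.univ, T t s := by
    intro t
    rw [expand t, ← Finset.add_sum_erase _ _ (Finset.mem_univ Finset.univ), huniv t]
  have hkey : ∀ t : ℝ, d (fun i => B i + (t * u i) • v)
      = d B + t * (∑ s ∈ (Finset.univ : Finset (Finset ι)).erase Finset.univ, T 1 s) := by
    intro t
    rw [hsplit t, Finset.mul_sum]
    congr 1
    exact Finset.sum_congr rfl fun s hs => hTne t s (Finset.ne_of_mem_erase hs)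
  have e1 : (fun i j => B i j + c * (u i * v j)) = fun i => B i + (c * u i) • v := by
    funext i j; simp [smul_eq_mul]; ring
  have e2 : (fun i j => B i j + u i * v j) = fun i => B i + (1 * u i) • v := by
    funext i j; simp [smul_eq_mul]
  rw [hdet, hdet, hdet, e1, e2, hkey c, hkey 1]
  ring

/-- A matrix of rank at most one is an outer product. -/
lemma exists_outer_of_rank_le_one {M n : ℕ} (C : Fin M → Fin n → ℝ)
    (h : (Matrix.of C).rank ≤ 1) :
    ∃ (u : Fin M → ℝ) (v : Fin n → ℝ), ∀ i j, C i j = u i * v j := by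
  set W := LinearMap.range (Matrix.of C).mulVecLin with hW
  have hrank : Module.finrank ℝ W ≤ 1 := h
  have hr : Module.rank ℝ W ≤ 1 := by
    rw [← Module.finrank_eq_rank]
    exact_mod_cast hrank
  obtain ⟨w₀, hw⟩ := (rank_submodule_le_one_iff' W).mp hr
  have hcol : ∀ j, (fun i => C i j) ∈ W := by
    intro j
    refine ⟨Pi.single j 1, ?_⟩
    funext i
    simp [Matrix.mulVecLin_apply, Matrix.mulVec_single]
  choose v hv using fun j => Submodule.mem_span_singleton.mp (hw (hcol j))
  exact ⟨w₀, v, fun i j => by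
    have := congrFun (hv j) i
    simp only [Pi.smul_apply, smul_eq_mul] at this
    rw [← this]; ring⟩


/-- A `C²` polyconvex -/
theorem rankOneConvex_of_polyconvex {M n : ℕ}
    (F : (Fin M → Fin n → ℝ) → ℝ) (hF : ContDiff ℝ 2 F)
    (G : (MinorIndex M n → ℝ) → ℝ) (hG : ConvexOn ℝ Set.univ G)
    (hFG : ∀ X, F X = G (minors X)) :
    ∀ X Y : Fin M → Fin n → ℝ, (Matrix.of (X - Y)).rank ≤ 1 →
      ∀ l ∈ Set.Icc (0 : ℝ) 1,
        F (l • X + (1 - l) • Y) ≤ l * F X + (1 - l) * F Y := by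
  intro X Y hrank l hl
  obtain ⟨hl0, hl1⟩ := hl
  obtain ⟨u, v, huv⟩ := exists_outer_of_rank_le_one (X - Y) hrank
  have hX : ∀ i j, X i j = Y i j + u i * v j := by
    intro i j
    have := huv i j
    simp only [Pi.sub_apply] at this
    linarith
  have hm : minors (l • X + (1 - l) • Y) = l • minors X + (1 - l) • minors Y := by
    funext p
    simp only [minors, Pi.add_apply, Pi.smul_apply, smul_eq_mul]
    have eZ : (Matrix.of (l • X + (1 - l) • Y)).submatrix p.2.1 p.2.2
        = Matrix.of (fun a b => Y (p.2.1 a) (p.2.2 b)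
            + l * (u (p.2.1 a) * v (p.2.2 b))) := by
      ext a b
      simp only [Matrix.submatrix_apply, Matrix.of_apply, Pi.add_apply, Pi.smul_apply,
        smul_eq_mul]
      rw [hX]; ring
    have eX : (Matrix.of X).submatrix p.2.1 p.2.2
        = Matrix.of (fun a b => Y (p.2.1 a) (p.2.2 b)
            + u (p.2.1 a) * v (p.2.2 b)) := by
      ext a b
      simp only [Matrix.submatrix_apply, Matrix.of_apply]
      exact hX _ _
    have eY : (Matrix.of Y).submatrix p.2.1 p.2.2
        = Matrix.of (fun a b => Y (p.2.1 a) (p.2.2 b)) := by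
      ext a b; simp [Matrix.submatrix_apply]
    rw [eZ, eX, eY, det_rankOne_affine]
    ring
  rw [hFG, hFG, hFG, hm]
  have h1 : (0:ℝ) ≤ 1 - l := by linarith
  exact hG.2 (Set.mem_univ (minors X)) (Set.mem_univ (minors Y)) hl0 h1 (by ring)
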